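/- Let f, g be bounded continuous nonnegative functions on ℝ and define the nonlinear operator L[f](λ) = ∫_ℝ K(λ−μ)·log(1 + ρ·e^{f(μ)}/Θ(μ)) dμ, where K(λ) = ħ/(π(λ²+ħ²)), ρ > 0, and Θ : ℝ → ℝ is continuous with inf_{λ∈ℝ} Θ(λ) = J > 0. Then |L[f](λ) − L[g](λ)| ≤ (ρ·e^{M}/(J + ρ·e^{M}))·‖f − g‖_∞ for all λ ∈ ℝ, where M = max(‖f‖_∞, ‖g‖_∞). In particular, the contraction constant is strictly less than 1, so L has at most one fixed point in this class. -/

import Mathlib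

open MeasureTheory Real

-- pointwise Lipschitz lemma
lemma tba_aux_pointwise (ρ J M T : ℝ) (hρ : 0 < ρ) (hJ : 0 < J) (hT : J ≤ T)
    (a b : ℝ) (ha : a ∈ Set.Icc 0 M) (hb : b ∈ Set.Icc 0 M) :
    |Real.log (1 + ρ * Real.exp a / T) - Real.log (1 + ρ * Real.exp b / T)|
      ≤ (ρ * Real.exp M / (J + ρ * Real.exp M)) * |a - b| := by
  have hT0 : 0 < T := lt_of_lt_of_le hJ hT
  set φ : ℝ → ℝ := fun t => Real.log (1 + ρ * Real.exp t / T)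
  set φ' : ℝ → ℝ := fun t => (ρ * Real.exp t / T) / (1 + ρ * Real.exp t / T)
  have hderiv : ∀ t ∈ Set.Icc 0 M, HasDerivWithinAt φ (φ' t) (Set.Icc 0 M) t := by
    intro t _
    have h1 : HasDerivAt (fun t => 1 + ρ * Real.exp t / T) (ρ * Real.exp t / T) t := by
      simpa using (((Real.hasDerivAt_exp t).const_mul ρ).div_const T).const_add 1
    have hne : 1 + ρ * Real.exp t / T ≠ 0 := by positivity
    exact (h1.log hne).hasDerivWithinAt
  have hbound : ∀ t ∈ Set.Icc 0 M, ‖φ' t‖ ≤ ρ * Real.exp M / (J + ρ * Real.exp M) := by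
    intro t ht
    have het : Real.exp t ≤ Real.exp M := Real.exp_le_exp.2 ht.2
    have h1 : φ' t = ρ * Real.exp t / (T + ρ * Real.exp t) := by
      simp only [φ']
      have hne : T + ρ * Real.exp t ≠ 0 := by positivity
      field_simp
    rw [Real.norm_eq_abs, h1, abs_of_nonneg (by positivity)]
    rw [div_le_div_iff₀ (by positivity) (by positivity)]
    nlinarith [Real.exp_pos t, Real.exp_pos M, mul_le_mul het hT hJ.le (Real.exp_pos M).le]
  have := (convex_Icc (0:ℝ) M).norm_image_sub_le_of_norm_hasDerivWithin_le hderiv hbound hb ha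
  simpa [Real.norm_eq_abs, abs_sub_comm] using this

lemma tba_aux_kernel (hbar : ℝ) (hpos : 0 < hbar) (lam : ℝ) :
    Integrable (fun μ : ℝ => hbar / (π * ((lam - μ) ^ 2 + hbar ^ 2)))
    ∧ (∫ μ : ℝ, hbar / (π * ((lam - μ) ^ 2 + hbar ^ 2))) = 1 := by
  have hπ : (0:ℝ) < π := Real.pi_pos
  have hb : hbar ≠ 0 := hpos.ne'
  have hrw : ∀ μ : ℝ, hbar / (π * ((lam - μ) ^ 2 + hbar ^ 2))
      = (π * hbar)⁻¹ * (1 + ((μ - lam) / hbar) ^ 2)⁻¹ := by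
    intro μ
    have h2 : (lam - μ)^2 = (μ - lam)^2 := by ring
    field_simp
    ring
  have hint : Integrable (fun μ : ℝ => (1 + ((μ - lam) / hbar) ^ 2)⁻¹) := by
    have h1 : Integrable (fun x : ℝ => (1 + (x / hbar) ^ 2)⁻¹) :=
      integrable_inv_one_add_sq.comp_div hb
    exact h1.comp_sub_right lam
  constructor
  · exact ((hint.const_mul ((π * hbar)⁻¹)).congr
      (Filter.Eventually.of_forall fun μ => (hrw μ).symm))
  · rw [show (fun μ : ℝ => hbar / (π * ((lam - μ) ^ 2 + hbar ^ 2)))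
        = fun μ : ℝ => (π * hbar)⁻¹ * (1 + ((μ - lam) / hbar) ^ 2)⁻¹ from funext hrw]
    rw [integral_const_mul]
    have h1 : (∫ μ : ℝ, (1 + ((μ - lam) / hbar) ^ 2)⁻¹)
        = ∫ x : ℝ, (1 + (x / hbar) ^ 2)⁻¹ :=
      integral_sub_right_eq_self (fun x => (1 + (x / hbar) ^ 2)⁻¹) lam
    rw [h1, MeasureTheory.Measure.integral_comp_div (fun x : ℝ => (1 + x ^ 2)⁻¹) hbar,
      integral_univ_inv_one_add_sq, abs_of_pos hpos, smul_eq_mul]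
    field_simp

theorem tba_operator_contraction (hbar : ℝ) (hpos : 0 < hbar)
    (ρ J : ℝ) (hρ : 0 < ρ) (hJ : 0 < J)
    (Θ : ℝ → ℝ) (hΘcont : Continuous Θ) (hΘinf : ∀ lam : ℝ, J ≤ Θ lam)
    (hΘinf' : ∀ ε > 0, ∃ lam : ℝ, Θ lam < J + ε)
    (K : ℝ → ℝ) (hK : ∀ lam : ℝ, K lam = hbar / (π * (lam ^ 2 + hbar ^ 2)))
    (f g : BoundedContinuousFunction ℝ ℝ)
    (hf : ∀ x : ℝ, 0 ≤ f x) (hg : ∀ x : ℝ, 0 ≤ g x)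
    (M : ℝ) (hM : M = max ‖f‖ ‖g‖) :
    ∀ lam : ℝ,
      |(∫ μ : ℝ, K (lam - μ) * Real.log (1 + ρ * Real.exp (f μ) / Θ μ))
        - (∫ μ : ℝ, K (lam - μ) * Real.log (1 + ρ * Real.exp (g μ) / Θ μ))|
        ≤ (ρ * Real.exp M / (J + ρ * Real.exp M)) * ‖f - g‖ := by
  intro lam
  obtain ⟨hKint, hKval⟩ := tba_aux_kernel hbar hpos lam
  have hKrw : (fun μ : ℝ => K (lam - μ)) = fun μ : ℝ => hbar / (π * ((lam - μ) ^ 2 + hbar ^ 2)) :=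
    funext fun μ => hK (lam - μ)
  have hKint' : Integrable (fun μ : ℝ => K (lam - μ)) := hKrw ▸ hKint
  have hKval' : (∫ μ : ℝ, K (lam - μ)) = 1 := by rw [hKrw]; exact hKval
  have hKnn : ∀ μ : ℝ, 0 ≤ K (lam - μ) := by
    intro μ
    rw [hK]
    positivity
  set c := ρ * Real.exp M / (J + ρ * Real.exp M) with hc
  have hc0 : 0 ≤ c := by positivity
  have hΘpos : ∀ μ, 0 < Θ μ := fun μ => lt_of_lt_of_le hJ (hΘinf μ)
  -- membership in Icc
  have hfM : ∀ μ, f μ ∈ Set.Icc (0:ℝ) M := by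
    intro μ
    refine ⟨hf μ, ?_⟩
    calc f μ ≤ |f μ| := le_abs_self _
    _ ≤ ‖f‖ := f.norm_coe_le_norm μ
    _ ≤ M := by rw [hM]; exact le_max_left _ _
  have hgM : ∀ μ, g μ ∈ Set.Icc (0:ℝ) M := by
    intro μ
    refine ⟨hg μ, ?_⟩
    calc g μ ≤ |g μ| := le_abs_self _
    _ ≤ ‖g‖ := g.norm_coe_le_norm μ
    _ ≤ M := by rw [hM]; exact le_max_right _ _
  have hfg : ∀ μ, |f μ - g μ| ≤ ‖f - g‖ := by
    intro μ
    have := (f - g).norm_coe_le_norm μ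
    simpa using this
  have key : ∀ μ : ℝ, |Real.log (1 + ρ * Real.exp (f μ) / Θ μ)
      - Real.log (1 + ρ * Real.exp (g μ) / Θ μ)| ≤ c * ‖f - g‖ := by
    intro μ
    calc |Real.log (1 + ρ * Real.exp (f μ) / Θ μ) - Real.log (1 + ρ * Real.exp (g μ) / Θ μ)|
        ≤ c * |f μ - g μ| :=
          tba_aux_pointwise ρ J M (Θ μ) hρ hJ (hΘinf μ) _ _ (hfM μ) (hgM μ)
      _ ≤ c * ‖f - g‖ := mul_le_mul_of_nonneg_left (hfg μ) hc0
  -- integrability of the two integrands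
  have hlogint : ∀ (h : BoundedContinuousFunction ℝ ℝ), (∀ x, h x ∈ Set.Icc (0:ℝ) M) →
      Integrable (fun μ : ℝ => K (lam - μ) * Real.log (1 + ρ * Real.exp (h μ) / Θ μ)) := by
    intro h hhM
    have hcont : Continuous fun μ : ℝ => Real.log (1 + ρ * Real.exp (h μ) / Θ μ) := by
      apply Continuous.log
      · exact continuous_const.add ((continuous_const.mul h.continuous.rexp).div hΘcont
          fun μ => (hΘpos μ).ne')
      · intro μ
        have hp := hΘpos μ
        have : 0 < 1 + ρ * Real.exp (h μ) / Θ μ := by positivity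
        exact this.ne'
    have hbdd : ∀ μ : ℝ, ‖Real.log (1 + ρ * Real.exp (h μ) / Θ μ)‖
        ≤ Real.log (1 + ρ * Real.exp M / J) := by
      intro μ
      have hp := hΘpos μ
      have h1 : (1:ℝ) ≤ 1 + ρ * Real.exp (h μ) / Θ μ := by
        have : 0 ≤ ρ * Real.exp (h μ) / Θ μ := by positivity
        linarith
      rw [Real.norm_eq_abs, abs_of_nonneg (Real.log_nonneg h1)]
      apply Real.log_le_log (by positivity)
      have : ρ * Real.exp (h μ) / Θ μ ≤ ρ * Real.exp M / J := by
        apply div_le_div₀ (by positivity) _ hJ (hΘinf μ)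
        exact mul_le_mul_of_nonneg_left (Real.exp_le_exp.2 (hhM μ).2) hρ.le
      linarith
    exact (hKint'.bdd_mul hcont.aestronglyMeasurable (Filter.Eventually.of_forall hbdd)).congr
      (Filter.Eventually.of_forall fun μ => mul_comm _ _)
  have hint1 := hlogint f hfM
  have hint2 := hlogint g hgM
  rw [← integral_sub hint1 hint2]
  rw [← Real.norm_eq_abs]
  have hbound : ∀ μ : ℝ, ‖K (lam - μ) * Real.log (1 + ρ * Real.exp (f μ) / Θ μ)
      - K (lam - μ) * Real.log (1 + ρ * Real.exp (g μ) / Θ μ)‖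
      ≤ K (lam - μ) * (c * ‖f - g‖) := by
    intro μ
    rw [← mul_sub, Real.norm_eq_abs, abs_mul, abs_of_nonneg (hKnn μ)]
    exact mul_le_mul_of_nonneg_left (key μ) (hKnn μ)
  calc ‖∫ μ : ℝ, (K (lam - μ) * Real.log (1 + ρ * Real.exp (f μ) / Θ μ)
        - K (lam - μ) * Real.log (1 + ρ * Real.exp (g μ) / Θ μ))‖
      ≤ ∫ μ : ℝ, K (lam - μ) * (c * ‖f - g‖) := by
        apply norm_integral_le_of_norm_le (hKint'.mul_const _)
        exact Filter.Eventually.of_forall hbound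
    _ = c * ‖f - g‖ := by rw [integral_mul_const, hKval', one_mul]
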